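/- If a is a regular scale factor and ∫_{t₀}^∞ dt/a(t) < ∞ for some t₀ > 0 (existence of a cosmological event horizon), then lim_{t→∞} t/a(t) = 0 and lim_{t→∞} 1/a'(t) = 0. -/

import Mathlib

open Set Filter MeasureTheory
open scoped Topology

/-- If a regular scale factor has a cosmological event horizon, then `t / a t → 0`
and `1 / a' t → 0` as `t → ∞`. -/
theorem cosmological_horizon_limits (a : ℝ → ℝ)
    (ha0 : a 0 = 0)
    (hmono : StrictMonoOn a (Set.Ici 0))
    (hcont : ContinuousOn a (Set.Ici 0))
    (hsmooth : ContDiffOn ℝ 2 a (Set.Ioi 0))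
    (hreg : ∀ t > (0:ℝ), a t * deriv (deriv a) t / (deriv a t) ^ 2 ≤ 1)
    (t₀ : ℝ) (ht₀ : 0 < t₀)
    (hhoriz : MeasureTheory.IntegrableOn (fun t => 1 / a t) (Set.Ioi t₀)) :
    Filter.Tendsto (fun t => t / a t) Filter.atTop (nhds 0) ∧
    Filter.Tendsto (fun t => 1 / deriv a t) Filter.atTop (nhds 0) := by
  -- positivity of a on (0, ∞)
  have hapos : ∀ t : ℝ, 0 < t → 0 < a t := by
    intro t ht
    have := hmono Set.self_mem_Ici (Set.mem_Ici.mpr ht.le) ht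
    rwa [ha0] at this
  have hane : ∀ t : ℝ, 0 < t → a t ≠ 0 := fun t ht => (hapos t ht).ne'
  -- differentiability facts
  have hdiffa : ∀ t : ℝ, 0 < t → DifferentiableAt ℝ a t := fun t ht =>
    (hsmooth.contDiffAt (isOpen_Ioi.mem_nhds ht)).differentiableAt (by norm_num)
  have hC1 : ContDiffOn ℝ 1 (deriv a) (Set.Ioi 0) :=
    hsmooth.deriv_of_isOpen isOpen_Ioi (by norm_num)
  have hconta' : ContinuousOn (deriv a) (Set.Ioi 0) := hC1.continuousOn
  have hdiffa' : ∀ t : ℝ, 0 < t → DifferentiableAt ℝ (deriv a) t := fun t ht =>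
    (hC1.contDiffAt (isOpen_Ioi.mem_nhds ht)).differentiableAt one_ne_zero
  -- a' is nonnegative on (0, ∞)
  have ha'nonneg : ∀ t : ℝ, 0 < t → 0 ≤ deriv a t := by
    intro t ht
    have hd := (hdiffa t ht).hasDerivAt
    rw [hasDerivAt_iff_tendsto_slope] at hd
    have hd' : Tendsto (slope a t) (𝓝[>] t) (𝓝 (deriv a t)) :=
      hd.mono_left (nhdsWithin_mono _ fun x hx => ne_of_gt hx)
    refine ge_of_tendsto hd' ?_
    filter_upwards [self_mem_nhdsWithin] with s hs
    have h1 : a t < a s := hmono (Set.mem_Ici.mpr ht.le) (Set.mem_Ici.mpr (ht.trans hs).le) hs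
    rw [slope_def_field]
    have : (t:ℝ) < s := hs
    exact div_nonneg (by linarith) (by linarith)
  -- key inequality : a * a'' ≤ (a')² on (0,∞)
  have hkey : ∀ t : ℝ, 0 < t → a t * deriv (deriv a) t ≤ (deriv a t) ^ 2 := by
    intro t ht
    rcases eq_or_ne (deriv a t) 0 with h0 | h0
    · have hmin : IsLocalMin (deriv a) t := by
        have hev : ∀ᶠ s in 𝓝 t, deriv a t ≤ deriv a s := by
          filter_upwards [isOpen_Ioi.mem_nhds (show t ∈ Set.Ioi (0:ℝ) from ht)] with s hs
          rw [h0]; exact ha'nonneg s hs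
        exact hev
      rw [hmin.deriv_eq_zero, h0]
      simp
    · have h2 := hreg t ht
      rwa [div_le_one (by positivity)] at h2
  -- the ratio a'/a is antitone on (0,∞)
  have hqdiff : ∀ t : ℝ, 0 < t → HasDerivAt (fun u => deriv a u / a u)
      ((deriv (deriv a) t * a t - deriv a t * deriv a t) / (a t) ^ 2) t := fun t ht =>
    (hdiffa' t ht).hasDerivAt.div (hdiffa t ht).hasDerivAt (hane t ht)
  have hqanti : AntitoneOn (fun u => deriv a u / a u) (Set.Ioi 0) := by
    refine antitoneOn_of_deriv_nonpos (convex_Ioi 0) ?_ ?_ ?_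
    · exact hconta'.div (hcont.mono Set.Ioi_subset_Ici_self) fun t ht => hane t ht
    · rw [interior_Ioi]
      exact fun t ht => (hqdiff t ht).differentiableAt.differentiableWithinAt
    · rw [interior_Ioi]
      intro t ht
      rw [(hqdiff t ht).deriv]
      apply div_nonpos_of_nonpos_of_nonneg
      · nlinarith [hkey t ht]
      · positivity
  -- a' is strictly positive on (0,∞)
  have ha'pos : ∀ t : ℝ, 0 < t → 0 < deriv a t := by
    intro t ht
    rcases (ha'nonneg t ht).lt_or_eq with h | h
    · exact h
    · exfalso
      have hzero : ∀ s : ℝ, t ≤ s → deriv a s = 0 := by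
        intro s hs
        have hspos : (0:ℝ) < s := lt_of_lt_of_le ht hs
        have hq := hqanti (show t ∈ Set.Ioi (0:ℝ) from ht)
          (show s ∈ Set.Ioi (0:ℝ) from hspos) hs
        simp only at hq
        rw [← h, zero_div] at hq
        rw [div_le_iff₀ (hapos s hspos)] at hq
        have := ha'nonneg s hspos
        linarith
      obtain ⟨c, hc, hceq⟩ := exists_deriv_eq_slope a (show t < t + 1 by linarith)
        (hcont.mono fun x hx => Set.mem_Ici.mpr (ht.le.trans hx.1))
        (fun x hx => (hdiffa x (ht.trans hx.1)).differentiableWithinAt)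
      have hslope : 0 < (a (t + 1) - a t) / (t + 1 - t) := by
        apply div_pos
        · have := hmono (Set.mem_Ici.mpr ht.le) (Set.mem_Ici.mpr (by linarith : (0:ℝ) ≤ t + 1))
            (by linarith)
          linarith
        · linarith
      rw [hzero c hc.1.le] at hceq
      linarith [hceq ▸ hslope]
  -- the main monotonicity inequality
  have hmono' : ∀ t s : ℝ, 0 < t → t ≤ s → deriv a s * a t ≤ deriv a t * a s := by
    intro t s ht hts
    have hs : 0 < s := lt_of_lt_of_le ht hts
    have hq := hqanti (show t ∈ Set.Ioi (0:ℝ) from ht) (show s ∈ Set.Ioi (0:ℝ) from hs) hts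
    simp only at hq
    rwa [div_le_div_iff₀ (hapos s hs) (hapos t ht)] at hq
  -- a tends to infinity
  have hatop : Tendsto a atTop atTop := by
    rw [tendsto_atTop]
    intro M
    by_cases hM : ∃ t₁, t₀ < t₁ ∧ M ≤ a t₁
    · obtain ⟨t₁, ht₁, hMt₁⟩ := hM
      filter_upwards [eventually_ge_atTop t₁] with s hs
      exact hMt₁.trans (hmono.monotoneOn (Set.mem_Ici.mpr (ht₀.trans ht₁).le)
        (Set.mem_Ici.mpr ((ht₀.trans ht₁).le.trans hs)) hs)
    · exfalso
      push_neg at hM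
      have hMpos : 0 < M := lt_trans (hapos (t₀ + 1) (by linarith)) (hM (t₀ + 1) (by linarith))
      have hconst : Integrable (fun _ : ℝ => 1 / M) (volume.restrict (Set.Ioi t₀)) := by
        refine hhoriz.mono' aestronglyMeasurable_const ?_
        rw [ae_restrict_iff' measurableSet_Ioi]
        refine ae_of_all _ fun s hs => ?_
        have hspos : 0 < s := ht₀.trans hs
        have h1 : a s < M := hM s hs
        rw [Real.norm_eq_abs, abs_of_pos (by positivity)]
        exact le_of_lt (one_div_lt_one_div_of_lt (hapos s hspos) h1)
      rcases (integrableOn_const_iff (C := 1 / M)).mp hconst with h | h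
      · exact one_div_ne_zero hMpos.ne' (enorm_eq_zero.mp h)
      · rw [Real.volume_Ioi] at h
        exact lt_irrefl _ h
  have hainv : Tendsto (fun T => 1 / a T) atTop (𝓝 0) := by
    exact hatop.inv_tendsto_atTop.congr fun T => by simp [one_div]
  -- integrability helpers
  have hfael : ∀ t : ℝ, t₀ ≤ t → IntegrableOn (fun s => 1 / a s) (Set.Ioi t) := fun t ht =>
    hhoriz.mono_set (Set.Ioi_subset_Ioi ht)
  have hae : ∀ u : ℝ, 0 < u → 0 ≤ᵐ[volume.restrict (Set.Ioi u)] fun s => 1 / a s := by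
    intro u hu
    filter_upwards [ae_restrict_mem measurableSet_Ioi] with s hs
    exact div_nonneg zero_le_one (hapos s (hu.trans hs)).le
  have hfii : ∀ t s : ℝ, t₀ ≤ t → t ≤ s → IntervalIntegrable (fun u => 1 / a u) volume t s := by
    intro t s h1 h2
    rw [intervalIntegrable_iff_integrableOn_Ioc_of_le h2]
    exact hhoriz.mono_set fun x hx => lt_of_le_of_lt h1 hx.1
  -- the tail integral F and its limit
  set F : ℝ → ℝ := fun t => ∫ s in Set.Ioi t, 1 / a s with hF
  have hFnonneg : ∀ t : ℝ, 0 < t → 0 ≤ F t := fun t ht =>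
    setIntegral_nonneg measurableSet_Ioi fun s hs =>
      div_nonneg zero_le_one (hapos s (ht.trans hs)).le
  have hFtendsto : Tendsto F atTop (𝓝 0) := by
    have hI := MeasureTheory.intervalIntegral_tendsto_integral_Ioi t₀ hhoriz tendsto_id
    have hdecomp : ∀ t : ℝ, t₀ ≤ t →
        F t = (∫ s in Set.Ioi t₀, 1 / a s) - ∫ s in t₀..t, 1 / a s := by
      intro t ht
      have hsplit : (∫ s in Set.Ioi t₀, 1 / a s) =
          (∫ s in Set.Ioc t₀ t, 1 / a s) + ∫ s in Set.Ioi t, 1 / a s := by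
        rw [← setIntegral_union (Set.Ioc_disjoint_Ioi le_rfl) measurableSet_Ioi
          (hhoriz.mono_set Set.Ioc_subset_Ioi_self) (hfael t ht), Set.Ioc_union_Ioi_eq_Ioi ht]
      rw [intervalIntegral.integral_of_le ht, hsplit, hF]
      ring
    have h2 : Tendsto (fun t => (∫ s in Set.Ioi t₀, 1 / a s) - ∫ s in t₀..t, 1 / a s) atTop
        (𝓝 ((∫ s in Set.Ioi t₀, 1 / a s) - ∫ s in Set.Ioi t₀, 1 / a s)) :=
      tendsto_const_nhds.sub hI
    rw [sub_self] at h2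
    refine h2.congr' ?_
    filter_upwards [eventually_ge_atTop t₀] with t ht
    exact (hdecomp t ht).symm
  -- First limit : t / a t → 0
  have hlim1 : Tendsto (fun t => t / a t) atTop (𝓝 0) := by
    have hhalf : Tendsto (fun t : ℝ => t / 2) atTop atTop :=
      tendsto_id.atTop_div_const (by norm_num)
    have hFhalf : Tendsto (fun t => 2 * F (t / 2)) atTop (𝓝 (2 * 0)) :=
      (hFtendsto.comp hhalf).const_mul 2
    rw [mul_zero] at hFhalf
    refine squeeze_zero' ?_ ?_ hFhalf
    · filter_upwards [eventually_gt_atTop 0] with t ht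
      exact div_nonneg ht.le (hapos t ht).le
    · filter_upwards [eventually_ge_atTop (2 * t₀)] with t ht
      have ht2 : t₀ ≤ t / 2 := by linarith
      have ht2pos : 0 < t / 2 := lt_of_lt_of_le ht₀ ht2
      have htpos : 0 < t := by linarith
      have hb1 : (1 / a t) * (volume (Set.Ioc (t / 2) t)).toReal ≤
          ∫ s in Set.Ioc (t / 2) t, 1 / a s := by
        rw [mul_comm, ← smul_eq_mul, ← measureReal_def]
        refine setIntegral_ge_of_const_le measurableSet_Ioc measure_Ioc_lt_top.ne ?_
          (hhoriz.mono_set fun x hx => lt_of_le_of_lt ht2 hx.1)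
        intro s hs
        have hspos : 0 < s := ht2pos.trans hs.1
        have hsle : a s ≤ a t :=
          hmono.monotoneOn (Set.mem_Ici.mpr hspos.le) (Set.mem_Ici.mpr htpos.le) hs.2
        exact one_div_le_one_div_of_le (hapos s hspos) hsle
      have hb2 : (∫ s in Set.Ioc (t / 2) t, 1 / a s) ≤ F (t / 2) := by
        refine setIntegral_mono_set (hfael (t / 2) ht2) (hae (t / 2) ht2pos)
          (HasSubset.Subset.eventuallyLE Set.Ioc_subset_Ioi_self)
      have hvol : (volume (Set.Ioc (t / 2) t)).toReal = t - t / 2 := by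
        rw [Real.volume_Ioc, ENNReal.toReal_ofReal (by linarith)]
      rw [hvol] at hb1
      have h3 : t / a t = 2 * ((1 / a t) * (t - t / 2)) := by ring
      rw [h3]
      have h4 : (1 / a t) * (t - t / 2) ≤ F (t / 2) := hb1.trans hb2
      linarith
  -- Second limit : 1 / a' t → 0
  have hlim2 : Tendsto (fun t => 1 / deriv a t) atTop (𝓝 0) := by
    have hbound : ∀ t : ℝ, t₀ < t → 1 / deriv a t ≤ F t := by
      intro t ht
      have htpos : 0 < t := ht₀.trans ht
      have hat := hapos t htpos
      have ha't := ha'pos t htpos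
      have hTle : ∀ T : ℝ, t ≤ T → (a t / deriv a t) * (1 / a t - 1 / a T) ≤ F t := by
        intro T hT
        have hftc : (∫ s in t..T, deriv a s / (a s) ^ 2) = 1 / a t - 1 / a T := by
          have hder : ∀ s ∈ Set.uIcc t T,
              HasDerivAt (fun u => -(1 / a u)) (deriv a s / (a s) ^ 2) s := by
            intro s hs
            rw [Set.uIcc_of_le hT] at hs
            have hspos : 0 < s := lt_of_lt_of_le htpos hs.1
            have h1 : HasDerivAt (fun u => (a u)⁻¹) (-(deriv a s) / (a s) ^ 2) s :=
              (hdiffa s hspos).hasDerivAt.inv (hane s hspos)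
            have h2 : HasDerivAt (fun u => -(a u)⁻¹) _ s := h1.neg
            simpa [one_div, neg_div] using h2
          have hcont2 : ContinuousOn (fun s => deriv a s / (a s) ^ 2) (Set.uIcc t T) := by
            rw [Set.uIcc_of_le hT]
            have hsub : Set.Icc t T ⊆ Set.Ioi 0 := fun x hx => lt_of_lt_of_le htpos hx.1
            refine (hconta'.mono hsub).div ((hcont.mono ?_).pow 2) ?_
            · exact fun x hx => Set.mem_Ici.mpr (htpos.le.trans hx.1)
            · intro x hx
              exact pow_ne_zero 2 (hane x (lt_of_lt_of_le htpos hx.1))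
          rw [intervalIntegral.integral_eq_sub_of_hasDerivAt hder hcont2.intervalIntegrable]
          ring
        have hpt : ∀ s ∈ Set.Icc t T,
            (a t / deriv a t) * (deriv a s / (a s) ^ 2) ≤ 1 / a s := by
          intro s hs
          have hspos : 0 < s := lt_of_lt_of_le htpos hs.1
          have hmm := hmono' t s htpos hs.1
          have haspos := hapos s hspos
          rw [div_mul_div_comm, div_le_div_iff₀ (mul_pos ha't (pow_pos haspos 2)) haspos]
          nlinarith [mul_le_mul_of_nonneg_right hmm haspos.le]
        have hLint : IntervalIntegrable
            (fun s => (a t / deriv a t) * (deriv a s / (a s) ^ 2)) volume t T := by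
          apply ContinuousOn.intervalIntegrable
          rw [Set.uIcc_of_le hT]
          have hsub : Set.Icc t T ⊆ Set.Ioi 0 := fun x hx => lt_of_lt_of_le htpos hx.1
          refine ContinuousOn.mul continuousOn_const ?_
          refine (hconta'.mono hsub).div ((hcont.mono ?_).pow 2) ?_
          · exact fun x hx => Set.mem_Ici.mpr (htpos.le.trans hx.1)
          · intro x hx
            exact pow_ne_zero 2 (hane x (lt_of_lt_of_le htpos hx.1))
        have hIle : (∫ s in t..T, (a t / deriv a t) * (deriv a s / (a s) ^ 2)) ≤
            ∫ s in t..T, 1 / a s :=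
          intervalIntegral.integral_mono_on hT hLint (hfii t T ht.le hT) hpt
        have heq : (∫ s in t..T, (a t / deriv a t) * (deriv a s / (a s) ^ 2)) =
            (a t / deriv a t) * (1 / a t - 1 / a T) := by
          rw [intervalIntegral.integral_const_mul, hftc]
        have hFle : (∫ s in t..T, 1 / a s) ≤ F t := by
          rw [intervalIntegral.integral_of_le hT]
          exact setIntegral_mono_set (hfael t ht.le) (hae t htpos)
            (HasSubset.Subset.eventuallyLE Set.Ioc_subset_Ioi_self)
        calc (a t / deriv a t) * (1 / a t - 1 / a T) = _ := heq.symm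
          _ ≤ ∫ s in t..T, 1 / a s := hIle
          _ ≤ F t := hFle
      have hlimT : Tendsto (fun T => (a t / deriv a t) * (1 / a t - 1 / a T)) atTop
          (𝓝 (1 / deriv a t)) := by
        have h5 : Tendsto (fun T => (a t / deriv a t) * (1 / a t - 1 / a T)) atTop
            (𝓝 ((a t / deriv a t) * (1 / a t - 0))) :=
          (tendsto_const_nhds.sub hainv).const_mul _
        have h6 : (a t / deriv a t) * (1 / a t - 0) = 1 / deriv a t := by
          field_simp
          ring
        rwa [h6] at h5
      refine le_of_tendsto hlimT ?_
      filter_upwards [eventually_ge_atTop t] with T hT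
      exact hTle T hT
    refine squeeze_zero' ?_ ?_ hFtendsto
    · filter_upwards [eventually_gt_atTop 0] with t ht
      exact (div_pos one_pos (ha'pos t ht)).le
    · filter_upwards [eventually_gt_atTop t₀] with t ht
      exact hbound t ht
  exact ⟨hlim1, hlim2⟩
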